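/- For every interval graph G, the graph G_α is an interval graph and ν(G_α) = ν(G) + 1. -/
import Mathlib


open Set

/-- An interval representation of a simple graph `G`: each vertex `v` gets a nonempty
closed interval `[l v, r v] ⊆ ℝ`, and two distinct vertices are adjacent iff their
intervals intersect. -/
structure IntervalRep {V : Type*} (G : SimpleGraph V) where
  l : V → ℝ
  r : V → ℝ
  le : ∀ v, l v ≤ r v
  adj_iff : ∀ u v : V, u ≠ v →
    (G.Adj u v ↔ (Icc (l u) (r u) ∩ Icc (l v) (r v)).Nonempty)

namespace IntervalRep

variable {V : Type*} {G : SimpleGraph V}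

/-- The interval of a vertex. -/
def itv (R : IntervalRep G) (v : V) : Set ℝ := Icc (R.l v) (R.r v)

/-- The nesting `ν(R)`: the maximum length of a chain of strictly nested vertex intervals. -/
noncomputable def nesting (R : IntervalRep G) : ℕ :=
  sSup {k : ℕ | ∃ f : Fin k → V, ∀ i j : Fin k, i < j → R.itv (f i) ⊂ R.itv (f j)}

/-- `ν_R(x)`: the maximum length of a chain of strictly nested vertex intervals whose
outermost interval is `I(x)` (counting `x` itself). -/
noncomputable def nuAt (R : IntervalRep G) (x : V) : ℕ :=
  sSup {k : ℕ | ∃ f : Fin k → V,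
    (∀ i j : Fin k, i < j → R.itv (f i) ⊂ R.itv (f j)) ∧
    ∃ h : 0 < k, f ⟨k - 1, by omega⟩ = x}

end IntervalRep

/-- A graph is an interval graph if it admits an interval representation. -/
def IsIntervalGraph {V : Type*} (G : SimpleGraph V) : Prop := Nonempty (IntervalRep G)

/-- The nesting number `ν(G)`: the minimum nesting over all interval representations. -/
noncomputable def nu {V : Type*} (G : SimpleGraph V) : ℕ :=
  sInf {n : ℕ | ∃ R : IntervalRep G, R.nesting = n}

/-- `G_α`: add vertices `u, a₁, a₂, b₁, b₂` (coded as `0,1,2,3,4`), with `u` adjacent to all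
of `G` and to `a₁, b₁`; `a₁ ~ a₂` and `b₁ ~ b₂`. -/
def Galpha {V : Type*} (G : SimpleGraph V) : SimpleGraph (V ⊕ Fin 5) :=
  SimpleGraph.fromRel fun x y =>
    match x, y with
    | Sum.inl a, Sum.inl b => G.Adj a b
    | Sum.inl _, Sum.inr i => i = 0
    | Sum.inr _, Sum.inl _ => False
    | Sum.inr i, Sum.inr j =>
        i = 0 ∧ j = 1 ∨ i = 1 ∧ j = 2 ∨ i = 0 ∧ j = 3 ∨ i = 3 ∧ j = 4

/-- `G_β`: add vertices `u, a₁, a₂` (coded as `0,1,2`), with `u` adjacent to all of `G`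
and to `a₁`; `a₁ ~ a₂`. -/
def Gbeta {V : Type*} (G : SimpleGraph V) : SimpleGraph (V ⊕ Fin 3) :=
  SimpleGraph.fromRel fun x y =>
    match x, y with
    | Sum.inl a, Sum.inl b => G.Adj a b
    | Sum.inl _, Sum.inr i => i = 0
    | Sum.inr _, Sum.inl _ => False
    | Sum.inr i, Sum.inr j => i = 0 ∧ j = 1 ∨ i = 1 ∧ j = 2

/-- `G_γ`: add vertices `u, v, a₁, a₂, b₁, b₂` (coded as `0,1,2,3,4,5`), with `u ~ v`, both
adjacent to all of `G`; `u ~ a₁`, `a₁ ~ a₂`, `v ~ b₁`, `b₁ ~ b₂`. -/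
def Ggamma {V : Type*} (G : SimpleGraph V) : SimpleGraph (V ⊕ Fin 6) :=
  SimpleGraph.fromRel fun x y =>
    match x, y with
    | Sum.inl a, Sum.inl b => G.Adj a b
    | Sum.inl _, Sum.inr i => i = 0 ∨ i = 1
    | Sum.inr _, Sum.inl _ => False
    | Sum.inr i, Sum.inr j =>
        i = 0 ∧ j = 1 ∨ i = 0 ∧ j = 2 ∨ i = 2 ∧ j = 3 ∨ i = 1 ∧ j = 4 ∨ i = 4 ∧ j = 5

/-- The disjoint union of a family of graphs, on the sigma type of their vertex sets. -/
def sigmaGraph {p : ℕ} {V : Fin p → Type*} (G : ∀ i, SimpleGraph (V i)) :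
    SimpleGraph (Σ i, V i) :=
  SimpleGraph.fromRel fun x y => ∃ h : x.1 = y.1, (G y.1).Adj (h ▸ x.2) y.2

/-- The graph obtained from `H` by adding one new vertex adjacent to every vertex of `H`. -/
def joinVertex {W : Type*} (H : SimpleGraph W) : SimpleGraph (W ⊕ Unit) :=
  SimpleGraph.fromRel fun x y =>
    match x, y with
    | Sum.inl a, Sum.inl b => H.Adj a b
    | Sum.inl _, Sum.inr _ => True
    | _, _ => False

open Real

section Aux
lemma arctan_lt_two' (x : ℝ) : Real.arctan x < 2 := by
  have := Real.arctan_lt_pi_div_two x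
  have := Real.pi_lt_d2
  linarith

lemma neg_two_lt_arctan' (x : ℝ) : -2 < Real.arctan x := by
  have := Real.neg_pi_div_two_lt_arctan x
  have := Real.pi_lt_d2
  linarith

lemma inter_nonempty_iff' {a b c d : ℝ} (hab : a ≤ b) (hcd : c ≤ d) :
    (Icc a b ∩ Icc c d).Nonempty ↔ a ≤ d ∧ c ≤ b := by
  rw [Set.Icc_inter_Icc, Set.nonempty_Icc, max_le_iff, le_min_iff, le_min_iff]
  tauto

lemma arctan_subset_iff {a b c d : ℝ} (hab : a ≤ b) (hcd : c ≤ d) :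
    Icc (arctan a) (arctan b) ⊆ Icc (arctan c) (arctan d) ↔ Icc a b ⊆ Icc c d := by
  rw [Set.Icc_subset_Icc_iff (Real.arctan_strictMono.monotone hab),
      Set.Icc_subset_Icc_iff hab, Real.arctan_strictMono.le_iff_le,
      Real.arctan_strictMono.le_iff_le]

lemma arctan_ssubset_iff {a b c d : ℝ} (hab : a ≤ b) (hcd : c ≤ d) :
    Icc (arctan a) (arctan b) ⊂ Icc (arctan c) (arctan d) ↔ Icc a b ⊂ Icc c d := by
  rw [Set.ssubset_iff_subset_ne, Set.ssubset_iff_subset_ne, arctan_subset_iff hab hcd]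
  constructor
  · rintro ⟨h1, h2⟩
    refine ⟨h1, fun h => h2 ?_⟩
    refine Set.Subset.antisymm ?_ ?_
    · rw [arctan_subset_iff hab hcd]; exact h.subset
    · rw [arctan_subset_iff hcd hab]; exact h.superset
  · rintro ⟨h1, h2⟩
    refine ⟨h1, fun h => h2 ?_⟩
    have h1' : Icc a b ⊆ Icc c d := h1
    have h2' : Icc c d ⊆ Icc a b := by
      rw [← arctan_subset_iff hcd hab]; rw [h]
    exact Set.Subset.antisymm h1' h2'
end Aux

namespace IntervalRep

variable {V : Type*} {G : SimpleGraph V}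

/-- The chain-length set of a representation. -/
def chainSet (R : IntervalRep G) : Set ℕ :=
  {k : ℕ | ∃ f : Fin k → V, ∀ i j : Fin k, i < j → R.itv (f i) ⊂ R.itv (f j)}

lemma nesting_eq_sSup (R : IntervalRep G) : R.nesting = sSup R.chainSet := rfl

lemma zero_mem_chainSet (R : IntervalRep G) : 0 ∈ R.chainSet :=
  ⟨Fin.elim0, fun i => i.elim0⟩

lemma chainSet_bddAbove [Fintype V] (R : IntervalRep G) : BddAbove R.chainSet := by
  refine ⟨Fintype.card V, ?_⟩
  rintro k ⟨f, hf⟩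
  have hinj : Function.Injective f := by
    intro i j hij
    by_contra hne
    rcases Ne.lt_or_gt hne with h | h
    · exact (hf i j h).ne (by rw [hij])
    · exact (hf j i h).ne (by rw [hij])
  simpa using Fintype.card_le_of_injective f hinj

lemma nesting_mem [Fintype V] (R : IntervalRep G) : R.nesting ∈ R.chainSet :=
  Nat.sSup_mem ⟨0, R.zero_mem_chainSet⟩ R.chainSet_bddAbove

lemma le_nesting [Fintype V] (R : IntervalRep G) {k : ℕ} (hk : k ∈ R.chainSet) :
    k ≤ R.nesting :=
  le_csSup R.chainSet_bddAbove hk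

lemma nesting_le [Fintype V] (R : IntervalRep G) {n : ℕ}
    (h : ∀ k ∈ R.chainSet, k ≤ n) : R.nesting ≤ n :=
  csSup_le ⟨0, R.zero_mem_chainSet⟩ h

end IntervalRep
section Construction
variable {V : Type*} {G : SimpleGraph V}

open Real

lemma galpha_adj_inl_inl (v w : V) :
    (Galpha G).Adj (Sum.inl v) (Sum.inl w) ↔ G.Adj v w := by
  rw [Galpha, SimpleGraph.fromRel_adj]
  constructor
  · rintro ⟨-, h | h⟩
    · exact h
    · exact h.symm
  · intro h
    exact ⟨by simp [h.ne], Or.inl h⟩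

lemma galpha_adj_inl_inr (v : V) (i : Fin 5) :
    (Galpha G).Adj (Sum.inl v) (Sum.inr i) ↔ i = 0 := by
  rw [Galpha, SimpleGraph.fromRel_adj]
  simp

lemma galpha_adj_inr_inr (i j : Fin 5) :
    (Galpha G).Adj (Sum.inr i) (Sum.inr j) ↔ i ≠ j ∧
      (i = 0 ∧ j = 1 ∨ i = 1 ∧ j = 2 ∨ i = 0 ∧ j = 3 ∨ i = 3 ∧ j = 4 ∨
       j = 0 ∧ i = 1 ∨ j = 1 ∧ i = 2 ∨ j = 0 ∧ i = 3 ∨ j = 3 ∧ i = 4) := by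
  rw [Galpha, SimpleGraph.fromRel_adj]
  simp only [ne_eq, Sum.inr.injEq]
  tauto

lemma aux_inl_inr {G : SimpleGraph V} (R : IntervalRep G) (v : V) (i : Fin 5) :
    (i = 0 ↔ (Icc (arctan (R.l v)) (arctan (R.r v)) ∩
      Icc (![(-2:ℝ), -3, -4, 2, 3] i) (![(2:ℝ), -2, -3, 3, 4] i)).Nonempty) := by
  have h1 := arctan_lt_two' (R.l v)
  have h1' := arctan_lt_two' (R.r v)
  have h2 := neg_two_lt_arctan' (R.l v)
  have h2' := neg_two_lt_arctan' (R.r v)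
  have h3 := Real.arctan_strictMono.monotone (R.le v)
  fin_cases i
  · show (0 : Fin 5) = 0 ↔ (Icc (arctan (R.l v)) (arctan (R.r v)) ∩ Icc (-2 : ℝ) 2).Nonempty
    rw [inter_nonempty_iff' h3 (by norm_num)]
    exact ⟨fun _ => ⟨by linarith, by linarith⟩, fun _ => rfl⟩
  · show (1 : Fin 5) = 0 ↔ (Icc (arctan (R.l v)) (arctan (R.r v)) ∩ Icc (-3 : ℝ) (-2)).Nonempty
    rw [inter_nonempty_iff' h3 (by norm_num)]
    exact ⟨fun h => absurd h (by decide), fun ⟨h4, _⟩ => absurd h4 (by linarith)⟩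
  · show (2 : Fin 5) = 0 ↔ (Icc (arctan (R.l v)) (arctan (R.r v)) ∩ Icc (-4 : ℝ) (-3)).Nonempty
    rw [inter_nonempty_iff' h3 (by norm_num)]
    exact ⟨fun h => absurd h (by decide), fun ⟨h4, _⟩ => absurd h4 (by linarith)⟩
  · show (3 : Fin 5) = 0 ↔ (Icc (arctan (R.l v)) (arctan (R.r v)) ∩ Icc (2 : ℝ) 3).Nonempty
    rw [inter_nonempty_iff' h3 (by norm_num)]
    exact ⟨fun h => absurd h (by decide), fun ⟨_, h5⟩ => absurd h5 (by linarith)⟩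
  · show (4 : Fin 5) = 0 ↔ (Icc (arctan (R.l v)) (arctan (R.r v)) ∩ Icc (3 : ℝ) 4).Nonempty
    rw [inter_nonempty_iff' h3 (by norm_num)]
    exact ⟨fun h => absurd h (by decide), fun ⟨_, h5⟩ => absurd h5 (by linarith)⟩

noncomputable def alphaRep (R : IntervalRep G) : IntervalRep (Galpha G) where
  l x := match x with
    | Sum.inl v => Real.arctan (R.l v)
    | Sum.inr i => ![-2, -3, -4, 2, 3] i
  r x := match x with
    | Sum.inl v => Real.arctan (R.r v)
    | Sum.inr i => ![2, -2, -3, 3, 4] i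
  le x := by
    match x with
    | Sum.inl v => exact Real.arctan_strictMono.monotone (R.le v)
    | Sum.inr i => fin_cases i <;> norm_num
  adj_iff x y hxy := by
    match x, y with
    | Sum.inl v, Sum.inl w =>
      have hvw : v ≠ w := by rintro rfl; exact hxy rfl
      rw [galpha_adj_inl_inl, R.adj_iff v w hvw,
        inter_nonempty_iff' (R.le v) (R.le w),
        inter_nonempty_iff' (Real.arctan_strictMono.monotone (R.le v))
          (Real.arctan_strictMono.monotone (R.le w)),
        Real.arctan_strictMono.le_iff_le, Real.arctan_strictMono.le_iff_le]
    | Sum.inl v, Sum.inr i =>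
      rw [galpha_adj_inl_inr]
      exact aux_inl_inr R v i
    | Sum.inr i, Sum.inl v =>
      rw [(Galpha G).adj_comm, galpha_adj_inl_inr, Set.inter_comm]
      exact aux_inl_inr R v i
    | Sum.inr i, Sum.inr j =>
      rw [galpha_adj_inr_inr]
      fin_cases i <;> fin_cases j <;>
        rw [inter_nonempty_iff' (by norm_num [Matrix.cons_val_succ])
          (by norm_num [Matrix.cons_val_succ])] <;>
        norm_num [Matrix.cons_val_succ] <;>
        first
        | exact absurd rfl hxy
        | decide
end Construction

section Bounds
variable {V : Type*} {G : SimpleGraph V}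
open Real

lemma alphaRep_inr_not_ssubset (R : IntervalRep G) (j : Fin 5) (y : V ⊕ Fin 5) :
    ¬ (alphaRep R).itv (Sum.inr j) ⊂ (alphaRep R).itv y := by
  intro h
  have hsub := h.subset
  match y with
  | Sum.inl v =>
    rw [IntervalRep.itv, IntervalRep.itv] at hsub
    have h1 := arctan_lt_two' (R.r v)
    have h2 := neg_two_lt_arctan' (R.l v)
    fin_cases j <;>
      rw [Set.Icc_subset_Icc_iff ((alphaRep R).le _)] at hsub <;>
      norm_num [alphaRep, Matrix.cons_val_succ] at hsub <;>
      obtain ⟨hA, hB⟩ := hsub <;> linarith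
  | Sum.inr j' =>
    rw [IntervalRep.itv, IntervalRep.itv] at hsub
    fin_cases j <;> fin_cases j' <;>
      first
      | exact (ssubset_irrefl _) h
      | (rw [Set.Icc_subset_Icc_iff ((alphaRep R).le _)] at hsub;
         norm_num [alphaRep, Matrix.cons_val_succ] at hsub)

lemma alphaRep_nesting_le [Fintype V] (R : IntervalRep G) :
    (alphaRep R).nesting ≤ R.nesting + 1 := by
  apply IntervalRep.nesting_le
  rintro k ⟨f, hf⟩
  rcases Nat.eq_zero_or_pos k with rfl | hk
  · omega
  have hinl : ∀ i : Fin k, i.1 + 1 < k → ∃ v, f i = Sum.inl v := by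
    intro i hi
    match hfi : f i with
    | Sum.inl v => exact ⟨v, rfl⟩
    | Sum.inr j =>
      exfalso
      have := hf i ⟨i.1 + 1, hi⟩ (by simp [Fin.lt_def])
      rw [hfi] at this
      exact alphaRep_inr_not_ssubset R j _ this
  suffices h : k - 1 ≤ R.nesting by omega
  apply R.le_nesting
  refine ⟨fun i => (hinl ⟨i.1, by have := i.2; omega⟩ (show i.1 + 1 < k by have := i.2; omega)).choose, ?_⟩
  intro i j hij
  have hi := (hinl ⟨i.1, by have := i.2; omega⟩ (show i.1 + 1 < k by have := i.2; omega)).choose_spec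
  have hj := (hinl ⟨j.1, by have := j.2; omega⟩ (show j.1 + 1 < k by have := j.2; omega)).choose_spec
  have hss := hf ⟨i.1, by have := i.2; omega⟩ ⟨j.1, by have := j.2; omega⟩
    (Fin.mk_lt_mk.mpr hij)
  rw [hi, hj] at hss
  exact (arctan_ssubset_iff (R.le _) (R.le _)).mp hss

/-- Restriction of a representation of `Galpha G` to `G`. -/
def restrictRep (S : IntervalRep (Galpha G)) : IntervalRep G where
  l v := S.l (Sum.inl v)
  r v := S.r (Sum.inl v)
  le v := S.le _
  adj_iff v w hvw := by
    rw [← galpha_adj_inl_inl (G := G) v w]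
    exact S.adj_iff _ _ (by simp [hvw])

lemma cross_lemma {a b c d e g : ℝ}
    (hXU : (Icc a b ∩ Icc c d).Nonempty)
    (hYX : (Icc e g ∩ Icc a b).Nonempty)
    (hYU : ¬ (Icc e g ∩ Icc c d).Nonempty) :
    c ∈ Icc a b ∨ d ∈ Icc a b := by
  obtain ⟨q, hqX, hqU⟩ := hXU
  obtain ⟨p, hpY, hpX⟩ := hYX
  have hpU : p ∉ Icc c d := fun hm => hYU ⟨p, hpY, hm⟩
  rw [Set.mem_Icc] at hqX hqU hpX
  rw [Set.mem_Icc, not_and_or, not_le, not_le] at hpU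
  rcases hpU with h | h
  · left; rw [Set.mem_Icc]; constructor <;> linarith
  · right; rw [Set.mem_Icc]; constructor <;> linarith

lemma inl_ssubset_u (S : IntervalRep (Galpha G)) (x : V) :
    S.itv (Sum.inl x) ⊂ S.itv (Sum.inr 0) := by
  have adjS : ∀ p q : V ⊕ Fin 5, p ≠ q → ((Galpha G).Adj p q ↔
      (Icc (S.l p) (S.r p) ∩ Icc (S.l q) (S.r q)).Nonempty) := S.adj_iff
  have hA1u : (Icc (S.l (Sum.inr 1)) (S.r (Sum.inr 1)) ∩
      Icc (S.l (Sum.inr 0)) (S.r (Sum.inr 0))).Nonempty := by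
    rw [← adjS _ _ (by simp), galpha_adj_inr_inr]; decide
  have hA2A1 : (Icc (S.l (Sum.inr 2)) (S.r (Sum.inr 2)) ∩
      Icc (S.l (Sum.inr 1)) (S.r (Sum.inr 1))).Nonempty := by
    rw [← adjS _ _ (by simp), galpha_adj_inr_inr]; decide
  have hA2u : ¬ (Icc (S.l (Sum.inr 2)) (S.r (Sum.inr 2)) ∩
      Icc (S.l (Sum.inr 0)) (S.r (Sum.inr 0))).Nonempty := by
    rw [← adjS _ _ (by simp), galpha_adj_inr_inr]; decide
  have hB1u : (Icc (S.l (Sum.inr 3)) (S.r (Sum.inr 3)) ∩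
      Icc (S.l (Sum.inr 0)) (S.r (Sum.inr 0))).Nonempty := by
    rw [← adjS _ _ (by simp), galpha_adj_inr_inr]; decide
  have hB2B1 : (Icc (S.l (Sum.inr 4)) (S.r (Sum.inr 4)) ∩
      Icc (S.l (Sum.inr 3)) (S.r (Sum.inr 3))).Nonempty := by
    rw [← adjS _ _ (by simp), galpha_adj_inr_inr]; decide
  have hB2u : ¬ (Icc (S.l (Sum.inr 4)) (S.r (Sum.inr 4)) ∩
      Icc (S.l (Sum.inr 0)) (S.r (Sum.inr 0))).Nonempty := by
    rw [← adjS _ _ (by simp), galpha_adj_inr_inr]; decide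
  have hA1B1 : ¬ (Icc (S.l (Sum.inr 1)) (S.r (Sum.inr 1)) ∩
      Icc (S.l (Sum.inr 3)) (S.r (Sum.inr 3))).Nonempty := by
    rw [← adjS _ _ (by simp), galpha_adj_inr_inr]; decide
  have hxu : (Icc (S.l (Sum.inl x)) (S.r (Sum.inl x)) ∩
      Icc (S.l (Sum.inr 0)) (S.r (Sum.inr 0))).Nonempty := by
    rw [← adjS _ _ (by simp), galpha_adj_inl_inr]
  have hxA1 : ¬ (Icc (S.l (Sum.inl x)) (S.r (Sum.inl x)) ∩
      Icc (S.l (Sum.inr 1)) (S.r (Sum.inr 1))).Nonempty := by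
    rw [← adjS _ _ (by simp), galpha_adj_inl_inr]; decide
  have hxB1 : ¬ (Icc (S.l (Sum.inl x)) (S.r (Sum.inl x)) ∩
      Icc (S.l (Sum.inr 3)) (S.r (Sum.inr 3))).Nonempty := by
    rw [← adjS _ _ (by simp), galpha_adj_inl_inr]; decide
  set lU := S.l (Sum.inr 0)
  set rU := S.r (Sum.inr 0)
  have hA := cross_lemma hA1u hA2A1 hA2u
  have hB := cross_lemma hB1u hB2B1 hB2u
  have key : (lU ∈ Icc (S.l (Sum.inr 1)) (S.r (Sum.inr 1)) ∨
      lU ∈ Icc (S.l (Sum.inr 3)) (S.r (Sum.inr 3))) ∧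
      (rU ∈ Icc (S.l (Sum.inr 1)) (S.r (Sum.inr 1)) ∨
      rU ∈ Icc (S.l (Sum.inr 3)) (S.r (Sum.inr 3))) := by
    rcases hA with h | h <;> rcases hB with h' | h'
    · exact absurd ⟨lU, h, h'⟩ hA1B1
    · exact ⟨Or.inl h, Or.inr h'⟩
    · exact ⟨Or.inr h', Or.inl h⟩
    · exact absurd ⟨rU, h, h'⟩ hA1B1
  have hlx : lU ∉ Icc (S.l (Sum.inl x)) (S.r (Sum.inl x)) := by
    intro hm
    rcases key.1 with h | h
    · exact hxA1 ⟨lU, hm, h⟩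
    · exact hxB1 ⟨lU, hm, h⟩
  have hrx : rU ∉ Icc (S.l (Sum.inl x)) (S.r (Sum.inl x)) := by
    intro hm
    rcases key.2 with h | h
    · exact hxA1 ⟨rU, hm, h⟩
    · exact hxB1 ⟨rU, hm, h⟩
  obtain ⟨s, hsx, hsu⟩ := hxu
  rw [Set.mem_Icc] at hsx hsu
  have hl : lU < S.l (Sum.inl x) := by
    by_contra hc
    push_neg at hc
    exact hlx (Set.mem_Icc.mpr ⟨hc, le_trans hsu.1 hsx.2⟩)
  have hr : S.r (Sum.inl x) < rU := by
    by_contra hc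
    push_neg at hc
    exact hrx (Set.mem_Icc.mpr ⟨le_trans hsx.1 hsu.2, hc⟩)
  constructor
  · exact Set.Icc_subset_Icc hl.le hr.le
  · intro hsup
    exact hlx (hsup (Set.mem_Icc.mpr ⟨le_refl _, S.le _⟩))

lemma restrict_nesting [Fintype V] (S : IntervalRep (Galpha G)) :
    (restrictRep S).nesting + 1 ≤ S.nesting := by
  obtain ⟨g, hg⟩ := (restrictRep S).nesting_mem
  apply S.le_nesting
  refine ⟨fun i => if h : i.1 < (restrictRep S).nesting
    then Sum.inl (g ⟨i.1, h⟩) else Sum.inr 0, ?_⟩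
  intro i j hij
  have hij' : i.1 < j.1 := hij
  have hj2 : j.1 < (restrictRep S).nesting + 1 := j.2
  by_cases hi : i.1 < (restrictRep S).nesting
  · by_cases hj : j.1 < (restrictRep S).nesting
    · simp only [dif_pos hi, dif_pos hj]
      exact hg ⟨i.1, hi⟩ ⟨j.1, hj⟩ hij'
    · simp only [dif_pos hi, dif_neg hj]
      exact inl_ssubset_u S _
  · omega

end Bounds

/-- `G_α` is an interval graph and `ν(G_α) = ν(G) + 1`. -/
theorem stmt_2 {V : Type*} [Fintype V] (G : SimpleGraph V) (hG : IsIntervalGraph G) :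
    IsIntervalGraph (Galpha G) ∧ nu (Galpha G) = nu G + 1 := by
  obtain ⟨R⟩ := hG
  have hne : {n : ℕ | ∃ R : IntervalRep G, R.nesting = n}.Nonempty := ⟨R.nesting, R, rfl⟩
  obtain ⟨R₀, hR₀⟩ := Nat.sInf_mem hne
  refine ⟨⟨alphaRep R₀⟩, le_antisymm ?_ ?_⟩
  · calc nu (Galpha G) ≤ (alphaRep R₀).nesting := Nat.sInf_le ⟨alphaRep R₀, rfl⟩
    _ ≤ R₀.nesting + 1 := alphaRep_nesting_le R₀
    _ = nu G + 1 := by rw [hR₀]; rfl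
  · have hne' : {n : ℕ | ∃ S : IntervalRep (Galpha G), S.nesting = n}.Nonempty :=
      ⟨(alphaRep R₀).nesting, alphaRep R₀, rfl⟩
    obtain ⟨S₀, hS₀⟩ := Nat.sInf_mem hne'
    have h1 : nu G ≤ (restrictRep S₀).nesting := Nat.sInf_le ⟨restrictRep S₀, rfl⟩
    have h2 := restrict_nesting S₀
    have h3 : S₀.nesting = nu (Galpha G) := hS₀
    omega
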